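/- For Re(s) > 1, the Dirichlet series F(s) = Σ_{n≥1} b(n) n^{-s}, where b is the indicator of integers expressible as a sum of two squares, satisfies the Euler product F(s) = (1-2^{-s})^{-1} · ∏_{q ≡ 1 mod 4} (1-q^{-s})^{-1} · ∏_{r ≡ 3 mod 4} (1-r^{-2s})^{-1}, with q, r ranging over primes in the indicated residue classes. -/

import Mathlib

open Classical in
/-- Indicator of integers expressible as a sum of two squares. -/
noncomputable def sumTwoSquaresInd (n : ℕ) : ℂ :=
  if ∃ a b : ℕ, n = a ^ 2 + b ^ 2 then 1 else 0

open Complex EulerProduct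

lemma eq_sq_add_sq_iff_old {n : ℕ} :
    (∃ x y : ℕ, n = x ^ 2 + y ^ 2) ↔
      ∀ {q : ℕ}, q.Prime → q % 4 = 3 → Even (padicValNat q n) := by
  rw [Nat.eq_sq_add_sq_iff]
  constructor
  · intro H q hq hq4
    by_cases hd : q ∈ n.primeFactors
    · exact H q hd hq4
    · rcases eq_or_ne n 0 with rfl | hn
      · simp
      · by_cases hdvd : q ∣ n
        · exact absurd (Nat.mem_primeFactors.mpr ⟨hq, hdvd, hn⟩) hd
        · haveI : Fact q.Prime := ⟨hq⟩
          rw [padicValNat.eq_zero_of_not_dvd hdvd]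
          exact Even.zero
  · intro H q hq hq4
    exact H (Nat.prime_of_mem_primeFactors hq) hq4

lemma sq2_mul {m n : ℕ} (hm : m ≠ 0) (hn : n ≠ 0) (h : Nat.Coprime m n) :
    (∃ x y : ℕ, m * n = x ^ 2 + y ^ 2) ↔
      (∃ x y : ℕ, m = x ^ 2 + y ^ 2) ∧ (∃ x y : ℕ, n = x ^ 2 + y ^ 2) := by
  rw [eq_sq_add_sq_iff_old, eq_sq_add_sq_iff_old, eq_sq_add_sq_iff_old]
  constructor
  · intro H
    have key : ∀ q : ℕ, q.Prime → q % 4 = 3 →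
        Even (padicValNat q m) ∧ Even (padicValNat q n) := by
      intro q hq hq4
      haveI : Fact q.Prime := ⟨hq⟩
      have hmul : padicValNat q (m * n) = padicValNat q m + padicValNat q n :=
        padicValNat.mul hm hn
      have hE : Even (padicValNat q m + padicValNat q n) := hmul ▸ H hq hq4
      have : ¬ (q ∣ m ∧ q ∣ n) := by
        rintro ⟨h1, h2⟩
        exact hq.one_lt.ne' (Nat.eq_one_of_dvd_coprimes h h1 h2)
      rcases not_and_or.mp this with h' | h'
      · have h0 : padicValNat q m = 0 := padicValNat.eq_zero_of_not_dvd h'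
        rw [h0] at hE ⊢
        exact ⟨Even.zero, by simpa using hE⟩
      · have h0 : padicValNat q n = 0 := padicValNat.eq_zero_of_not_dvd h'
        rw [h0] at hE ⊢
        exact ⟨by simpa using hE, Even.zero⟩
    exact ⟨fun {q} hq hq4 => (key q hq hq4).1, fun {q} hq hq4 => (key q hq hq4).2⟩
  · rintro ⟨H1, H2⟩ q hq hq4
    haveI : Fact q.Prime := ⟨hq⟩
    rw [padicValNat.mul hm hn]
    exact (H1 hq hq4).add (H2 hq hq4)

lemma sq2_pow_not_three {p : ℕ} (hp : p.Prime) (hp4 : p % 4 ≠ 3) (e : ℕ) :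
    ∃ x y : ℕ, p ^ e = x ^ 2 + y ^ 2 := by
  rw [eq_sq_add_sq_iff_old]
  intro q hq hq4
  rcases Nat.eq_zero_or_pos (padicValNat q (p ^ e)) with h0 | hpos
  · rw [h0]; exact Even.zero
  · haveI : Fact q.Prime := ⟨hq⟩
    have hdvd : q ∣ p ^ e := dvd_of_one_le_padicValNat hpos
    have := (Nat.prime_dvd_prime_iff_eq hq hp).mp (hq.dvd_of_dvd_pow hdvd)
    exact absurd (this ▸ hq4) hp4

lemma sq2_pow_three {p : ℕ} (hp : p.Prime) (hp4 : p % 4 = 3) (e : ℕ) :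
    (∃ x y : ℕ, p ^ e = x ^ 2 + y ^ 2) ↔ Even e := by
  haveI : Fact p.Prime := ⟨hp⟩
  rw [eq_sq_add_sq_iff_old]
  constructor
  · intro H
    have := H hp hp4
    rwa [padicValNat.prime_pow e] at this
  · intro he q hq hq4
    rcases Nat.eq_zero_or_pos (padicValNat q (p ^ e)) with h0 | hpos
    · rw [h0]; exact Even.zero
    · haveI : Fact q.Prime := ⟨hq⟩
      have hdvd : q ∣ p ^ e := dvd_of_one_le_padicValNat hpos
      have heq := (Nat.prime_dvd_prime_iff_eq hq hp).mp (hq.dvd_of_dvd_pow hdvd)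
      subst heq
      rwa [padicValNat.prime_pow e]

lemma sq2_ind_one : sumTwoSquaresInd 1 = 1 := by
  rw [sumTwoSquaresInd, if_pos ⟨1, 0, by norm_num⟩]

/-- General indicator Euler factor existence: for any predicate on primes, the product of
`(1 - p^{-w})⁻¹` over primes satisfying the predicate (extended by 1 elsewhere) converges. -/
lemma euler_factor_exists (w : ℂ) (hw : 1 < w.re) (cond : ℕ → Prop) [DecidablePred cond] :
    ∃ a : ℂ, HasProd
      (fun p : Nat.Primes => if cond (p : ℕ) then (1 - ((p : ℕ) : ℂ) ^ (-w))⁻¹ else 1) a := by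
  classical
  have hw0 : w ≠ 0 := ne_zero_of_one_lt_re hw
  set Z := riemannZetaSummandHom hw0 with hZdef
  have hZ : ∀ n : ℕ, Z n = (n : ℂ) ^ (-w) := fun n => rfl
  set c : ℕ → ℂ := fun n => if (∀ p : ℕ, p.Prime → p ∣ n → cond p) then 1 else 0 with hcdef
  have hc' : ∀ k : ℕ, c k = if (∀ p : ℕ, p.Prime → p ∣ k → cond p) then 1 else 0 :=
    fun k => rfl
  set f : ℕ → ℂ := fun n => c n * Z n with hfdef
  have hf' : ∀ k : ℕ, f k = c k * Z k := fun k => rfl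
  have hf1 : f 1 = 1 := by
    have h1 : c 1 = 1 := by
      rw [hc', if_pos]
      intro p hp hdvd
      exact absurd (Nat.dvd_one.mp hdvd) hp.one_lt.ne'
    rw [hf', h1, one_mul, map_one]
  have hf0 : f 0 = 0 := by rw [hf', map_zero, mul_zero]
  have hmul : ∀ {m n : ℕ}, Nat.Coprime m n → f (m * n) = f m * f n := by
    intro m n h
    have hc : c (m * n) = c m * c n := by
      rw [hc', hc', hc']
      by_cases h1 : ∀ p : ℕ, p.Prime → p ∣ m → cond p <;>
        by_cases h2 : ∀ p : ℕ, p.Prime → p ∣ n → cond p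
      · rw [if_pos h1, if_pos h2, if_pos, one_mul]
        intro p hp hdvd
        rcases (Nat.Prime.dvd_mul hp).mp hdvd with h' | h'
        · exact h1 p hp h'
        · exact h2 p hp h'
      all_goals {
        rw [if_neg]
        · simp [h1, h2]
        · intro H
          refine (by simp [h1, h2] : ¬ ((∀ p : ℕ, p.Prime → p ∣ m → cond p)
              ∧ (∀ p : ℕ, p.Prime → p ∣ n → cond p))) ?_
          exact ⟨fun p hp hd => H p hp (hd.mul_right n),
            fun p hp hd => H p hp (hd.mul_left m)⟩ }
    rw [hf', hf', hf', hc, map_mul]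
    ring
  have hsum : Summable (fun n => ‖f n‖) := by
    refine Summable.of_nonneg_of_le (fun n => norm_nonneg _) (fun n => ?_)
      (summable_riemannZetaSummand hw)
    rw [hf', norm_mul]
    have hb : ‖c n‖ ≤ 1 := by
      rw [hc']; split_ifs <;> simp
    calc ‖c n‖ * ‖Z n‖ ≤ 1 * ‖Z n‖ := mul_le_mul_of_nonneg_right hb (norm_nonneg _)
      _ = ‖Z n‖ := one_mul _
  have hEuler : HasProd (fun p : Nat.Primes => ∑' e : ℕ, f ((p : ℕ) ^ e)) (∑' n, f n) :=
    eulerProduct_hasProd hf1 hmul hsum hf0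
  have hnorm : ∀ p : Nat.Primes, ‖((p : ℕ) : ℂ) ^ (-w)‖ < 1 := by
    intro p
    have hp1 : (1 : ℝ) < (p : ℕ) := by exact_mod_cast p.2.one_lt
    rw [← ofReal_natCast,
      norm_cpow_eq_rpow_re_of_pos (by positivity) _, neg_re]
    exact Real.rpow_lt_one_of_one_lt_of_neg hp1 (by linarith)
  have hlocal : ∀ p : Nat.Primes, (∑' e : ℕ, f ((p : ℕ) ^ e))
      = if cond (p : ℕ) then (1 - ((p : ℕ) : ℂ) ^ (-w))⁻¹ else 1 := by
    intro p
    have hp := p.2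
    by_cases hcond : cond (p : ℕ)
    · rw [if_pos hcond]
      have hterm : ∀ e : ℕ, f ((p : ℕ) ^ e) = (((p : ℕ) : ℂ) ^ (-w)) ^ e := by
        intro e
        have : c ((p : ℕ) ^ e) = 1 := by
          rw [hc', if_pos]
          intro q hq hdvd
          have := (Nat.prime_dvd_prime_iff_eq hq hp).mp (hq.dvd_of_dvd_pow hdvd)
          exact this ▸ hcond
        rw [hf', this, one_mul, map_pow, hZ]
      rw [tsum_congr hterm]
      exact tsum_geometric_of_norm_lt_one (hnorm p)
    · rw [if_neg hcond]
      have hterm : ∀ e : ℕ, f ((p : ℕ) ^ e) = if e = 0 then 1 else 0 := by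
        intro e
        rcases Nat.eq_zero_or_pos e with rfl | he
        · simpa using hf1
        · rw [if_neg he.ne']
          have : c ((p : ℕ) ^ e) = 0 := by
            rw [hc', if_neg]
            intro H
            exact hcond (H (p : ℕ) hp (dvd_pow_self _ he.ne'))
          rw [hf', this, zero_mul]
      rw [tsum_congr hterm]
      exact tsum_ite_eq 0 (fun _ => (1 : ℂ))
  exact ⟨∑' n, f n, (funext hlocal) ▸ hEuler⟩

set_option maxHeartbeats 1000000 in
/-- For `Re(s) > 1`, the Dirichlet series `F(s) = Σ b(n) n^{-s}` of the
sum-of-two-squares indicator has the Euler product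
`F(s) = (1-2^{-s})^{-1} ∏_{q ≡ 1 (4)} (1-q^{-s})^{-1} ∏_{r ≡ 3 (4)} (1-r^{-2s})^{-1}`. -/
theorem sumTwoSquares_euler_product (s : ℂ) (hs : 1 < s.re) :
    (∑' n : ℕ, sumTwoSquaresInd (n + 1) / (((n : ℕ) + 1 : ℂ)) ^ s)
        = (1 - (2 : ℂ) ^ (-s))⁻¹
          * (∏' q : {p : Nat.Primes // (p : ℕ) % 4 = 1}, (1 - ((q.1 : ℕ) : ℂ) ^ (-s))⁻¹)
          * (∏' r : {p : Nat.Primes // (p : ℕ) % 4 = 3}, (1 - ((r.1 : ℕ) : ℂ) ^ (-(2 * s)))⁻¹)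
      ∧ Multipliable
          (fun q : {p : Nat.Primes // (p : ℕ) % 4 = 1} => (1 - ((q.1 : ℕ) : ℂ) ^ (-s))⁻¹)
      ∧ Multipliable
          (fun r : {p : Nat.Primes // (p : ℕ) % 4 = 3} => (1 - ((r.1 : ℕ) : ℂ) ^ (-(2 * s)))⁻¹) := by
  have hs0 : s ≠ 0 := ne_zero_of_one_lt_re hs
  have h2s : 1 < (2 * s).re := by
    have h : (2 * s).re = 2 * s.re := by simp [Complex.mul_re]
    rw [h]; linarith
  set Z := riemannZetaSummandHom hs0 with hZdef
  set f : ℕ → ℂ := fun n => sumTwoSquaresInd n * Z n with hfdef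
  have hZ : ∀ n : ℕ, Z n = (n : ℂ) ^ (-s) := fun n => rfl
  have hf1 : f 1 = 1 := by simp [hfdef, sq2_ind_one]
  have hf0 : f 0 = 0 := by
    have h0 : Z 0 = 0 := map_zero Z
    simp [hfdef, h0]
  have hmul : ∀ {m n : ℕ}, Nat.Coprime m n → f (m * n) = f m * f n := by
    intro m n h
    rcases eq_or_ne m 0 with rfl | hm
    · rw [Nat.coprime_zero_left] at h
      subst h; simp [hf0, hf1]
    rcases eq_or_ne n 0 with rfl | hn
    · rw [Nat.coprime_zero_right] at h
      subst h; simp [hf0, hf1]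
    have hind : sumTwoSquaresInd (m * n) = sumTwoSquaresInd m * sumTwoSquaresInd n := by
      rw [sumTwoSquaresInd, sumTwoSquaresInd, sumTwoSquaresInd]
      by_cases h1 : ∃ x y : ℕ, m = x ^ 2 + y ^ 2 <;>
        by_cases h2 : ∃ x y : ℕ, n = x ^ 2 + y ^ 2 <;>
        simp [h1, h2, (sq2_mul hm hn h)]
    simp only [hfdef, hind, map_mul]
    ring
  have hsum : Summable (fun n => ‖f n‖) := by
    refine Summable.of_nonneg_of_le (fun n => norm_nonneg _) (fun n => ?_)
      (summable_riemannZetaSummand hs)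
    simp only [hfdef, norm_mul]
    have hb : ‖sumTwoSquaresInd n‖ ≤ 1 := by
      rw [sumTwoSquaresInd]; split_ifs <;> simp
    calc ‖sumTwoSquaresInd n‖ * ‖Z n‖ ≤ 1 * ‖Z n‖ :=
          mul_le_mul_of_nonneg_right hb (norm_nonneg _)
      _ = ‖Z n‖ := one_mul _
  have hEuler : HasProd (fun p : Nat.Primes => ∑' e : ℕ, f ((p : ℕ) ^ e)) (∑' n, f n) :=
    eulerProduct_hasProd hf1 hmul hsum hf0
  have hnorm : ∀ p : Nat.Primes, ‖((p : ℕ) : ℂ) ^ (-s)‖ < 1 := by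
    intro p
    have hp1 : (1 : ℝ) < (p : ℕ) := by exact_mod_cast p.2.one_lt
    rw [← ofReal_natCast,
      norm_cpow_eq_rpow_re_of_pos (by positivity) _, neg_re]
    exact Real.rpow_lt_one_of_one_lt_of_neg hp1 (by linarith)
  have hpow2 : ∀ p : Nat.Primes,
      (((p : ℕ) : ℂ) ^ (-s)) ^ (2 : ℕ) = ((p : ℕ) : ℂ) ^ (-(2 * s)) := by
    intro p
    rw [show -(2 * s) = ((2 : ℕ) : ℂ) * (-s) by push_cast; ring, cpow_nat_mul]
  -- the local factor of `f` at a prime `p`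
  have hlocal : ∀ p : Nat.Primes, (∑' e : ℕ, f ((p : ℕ) ^ e))
      = if (p : ℕ) % 4 = 3 then (1 - ((p : ℕ) : ℂ) ^ (-(2 * s)))⁻¹
        else (1 - ((p : ℕ) : ℂ) ^ (-s))⁻¹ := by
    intro p
    have hp := p.2
    by_cases h3 : (p : ℕ) % 4 = 3
    · rw [if_pos h3]
      have hterm : ∀ e : ℕ, f ((p : ℕ) ^ e)
          = if Even e then (((p : ℕ) : ℂ) ^ (-s)) ^ e else 0 := by
        intro e
        simp only [hfdef, sumTwoSquaresInd]
        rw [map_pow, hZ]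
        by_cases he : Even e
        · rw [if_pos ((sq2_pow_three hp h3 e).mpr he), if_pos he, one_mul]
        · rw [if_neg (fun hc => he ((sq2_pow_three hp h3 e).mp hc)), if_neg he, zero_mul]
      have hinj : Function.Injective (fun k : ℕ => 2 * k) := fun a b h => by
        simp only at h; omega
      have hvan : Function.support
            (fun x : ℕ => if Even x then (((p : ℕ) : ℂ) ^ (-s)) ^ x else 0)
          ⊆ Set.range (fun k : ℕ => 2 * k) := by
        intro x hx
        rw [Function.mem_support] at hx
        by_cases hev : Even x
        · obtain ⟨k, hk⟩ := hev
          exact ⟨k, show 2 * k = x by omega⟩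
        · simp [hev] at hx
      calc (∑' e : ℕ, f ((p : ℕ) ^ e))
          = ∑' e : ℕ, (if Even e then (((p : ℕ) : ℂ) ^ (-s)) ^ e else 0) := tsum_congr hterm
        _ = ∑' k : ℕ, (if Even (2 * k) then (((p : ℕ) : ℂ) ^ (-s)) ^ (2 * k) else 0) :=
            (Function.Injective.tsum_eq hinj hvan).symm
        _ = ∑' k : ℕ, ((((p : ℕ) : ℂ) ^ (-s)) ^ (2 : ℕ)) ^ k := by
            refine tsum_congr fun k => ?_
            rw [if_pos (even_two_mul k), pow_mul]
        _ = (1 - (((p : ℕ) : ℂ) ^ (-s)) ^ (2 : ℕ))⁻¹ := by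
            refine tsum_geometric_of_norm_lt_one ?_
            rw [norm_pow]
            exact pow_lt_one₀ (norm_nonneg _) (hnorm p) (by norm_num)
        _ = (1 - ((p : ℕ) : ℂ) ^ (-(2 * s)))⁻¹ := by rw [hpow2 p]
    · rw [if_neg h3]
      have hterm : ∀ e : ℕ, f ((p : ℕ) ^ e) = (((p : ℕ) : ℂ) ^ (-s)) ^ e := by
        intro e
        simp only [hfdef, sumTwoSquaresInd]
        rw [map_pow, hZ, if_pos (sq2_pow_not_three hp h3 e), one_mul]
      rw [tsum_congr hterm]
      exact tsum_geometric_of_norm_lt_one (hnorm p)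
  -- the three partial Euler products
  obtain ⟨a1, hA1⟩ := euler_factor_exists s hs (fun p => p % 4 = 1)
  obtain ⟨a3, hA3⟩ := euler_factor_exists (2 * s) h2s (fun p => p % 4 = 3)
  set two : Nat.Primes := ⟨2, Nat.prime_two⟩ with htwo
  have hA2 : HasProd (fun p : Nat.Primes => if p = two then (1 - (2 : ℂ) ^ (-s))⁻¹ else 1)
      ((1 - (2 : ℂ) ^ (-s))⁻¹) := hasProd_ite_eq two _
  -- HasProd over the subtypes
  have hmi1 : (fun p : Nat.Primes => if (p : ℕ) % 4 = 1 then (1 - ((p : ℕ) : ℂ) ^ (-s))⁻¹ else 1)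
      = Set.mulIndicator {p : Nat.Primes | (p : ℕ) % 4 = 1}
          (fun p : Nat.Primes => (1 - ((p : ℕ) : ℂ) ^ (-s))⁻¹) := by
    funext p
    by_cases h : (p : ℕ) % 4 = 1
    · rw [if_pos h]
      exact (Set.mulIndicator_of_mem
        (show p ∈ {q : Nat.Primes | (q : ℕ) % 4 = 1} from h)
        (fun p : Nat.Primes => (1 - ((p : ℕ) : ℂ) ^ (-s))⁻¹)).symm
    · rw [if_neg h]
      exact (Set.mulIndicator_of_notMem
        (show p ∉ {q : Nat.Primes | (q : ℕ) % 4 = 1} from h)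
        (fun p : Nat.Primes => (1 - ((p : ℕ) : ℂ) ^ (-s))⁻¹)).symm
  have hmi3 : (fun p : Nat.Primes =>
        if (p : ℕ) % 4 = 3 then (1 - ((p : ℕ) : ℂ) ^ (-(2 * s)))⁻¹ else 1)
      = Set.mulIndicator {p : Nat.Primes | (p : ℕ) % 4 = 3}
          (fun p : Nat.Primes => (1 - ((p : ℕ) : ℂ) ^ (-(2 * s)))⁻¹) := by
    funext p
    by_cases h : (p : ℕ) % 4 = 3
    · rw [if_pos h]
      exact (Set.mulIndicator_of_mem
        (show p ∈ {q : Nat.Primes | (q : ℕ) % 4 = 3} from h)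
        (fun p : Nat.Primes => (1 - ((p : ℕ) : ℂ) ^ (-(2 * s)))⁻¹)).symm
    · rw [if_neg h]
      exact (Set.mulIndicator_of_notMem
        (show p ∉ {q : Nat.Primes | (q : ℕ) % 4 = 3} from h)
        (fun p : Nat.Primes => (1 - ((p : ℕ) : ℂ) ^ (-(2 * s)))⁻¹)).symm
  have hsub1 : HasProd
      (fun q : {p : Nat.Primes // (p : ℕ) % 4 = 1} => (1 - ((q.1 : ℕ) : ℂ) ^ (-s))⁻¹) a1 := by
    have := hasProd_subtype_iff_mulIndicator.mpr (hmi1 ▸ hA1)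
    exact this
  have hsub3 : HasProd
      (fun r : {p : Nat.Primes // (p : ℕ) % 4 = 3} =>
        (1 - ((r.1 : ℕ) : ℂ) ^ (-(2 * s)))⁻¹) a3 := by
    have := hasProd_subtype_iff_mulIndicator.mpr (hmi3 ▸ hA3)
    exact this
  refine ⟨?_, hsub1.multipliable, hsub3.multipliable⟩
  rw [hsub1.tprod_eq, hsub3.tprod_eq]
  -- identify the local factors
  have hGeq : (fun p : Nat.Primes => ∑' e : ℕ, f ((p : ℕ) ^ e))
      = fun p : Nat.Primes =>
        (if p = two then (1 - (2 : ℂ) ^ (-s))⁻¹ else 1)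
        * (if (p : ℕ) % 4 = 1 then (1 - ((p : ℕ) : ℂ) ^ (-s))⁻¹ else 1)
        * (if (p : ℕ) % 4 = 3 then (1 - ((p : ℕ) : ℂ) ^ (-(2 * s)))⁻¹ else 1) := by
    funext p
    rw [hlocal p]
    rcases p.2.eq_two_or_odd' with h2 | hodd
    · have hp2 : p = two := Subtype.ext h2
      rw [if_pos hp2, if_neg (show ¬ (p : ℕ) % 4 = 3 by omega),
        if_neg (show ¬ (p : ℕ) % 4 = 1 by omega),
        if_neg (show ¬ (p : ℕ) % 4 = 3 by omega)]
      have : ((p : ℕ) : ℂ) = 2 := by rw [h2]; push_cast; ring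
      rw [this]
      ring
    · have hne2 : (p : ℕ) ≠ 2 := by
        intro h
        rw [h] at hodd
        exact absurd (Nat.odd_iff.mp hodd) (by norm_num)
      have hptwo : p ≠ two := fun h => hne2 (congrArg Subtype.val h)
      have hm2 : (p : ℕ) % 2 = 1 := Nat.odd_iff.mp hodd
      have hcases : (p : ℕ) % 4 = 1 ∨ (p : ℕ) % 4 = 3 := by omega
      rcases hcases with h1 | h3
      · rw [if_neg (show ¬ (p : ℕ) % 4 = 3 by omega), if_neg hptwo, if_pos h1,
          if_neg (show ¬ (p : ℕ) % 4 = 3 by omega)]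
        ring
      · rw [if_pos h3, if_neg hptwo, if_neg (show ¬ (p : ℕ) % 4 = 1 by omega), if_pos h3]
        ring
  have hBig := (hA2.mul hA1).mul hA3
  rw [← hGeq] at hBig
  have key := hEuler.unique hBig
  rw [← key]
  rw [Summable.tsum_eq_zero_add hsum.of_norm, hf0, zero_add]
  refine tsum_congr fun n => ?_
  simp only [hfdef]
  rw [hZ, cpow_neg]
  push_cast
  rw [div_eq_mul_inv]
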